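/- Let Q be an n×n real matrix (indexed 0,…,n−1) satisfying the skip-free submatrix conditions: Q(i,i+1) > 0 for 0 ≤ i ≤ n−2; Q(i,j) = 0 whenever j > i+1; Q(i,j) ≥ 0 for all i ≠ j; Q(i,i) < 0 for all i; Σ_{j=0}^{n−1} Q(i,j) = 0 for 0 ≤ i ≤ n−2; and Σ_{j=0}^{n−1} Q(n−1,j) < 0. Set A := −Q and assume in addition that the symmetric part (A + Aᵀ)/2 is positive definite. Then for every bounded measurable function g : ℝⁿ → ℝ with g ≥ 0, ∫_{ℝⁿ}∫_{ℝⁿ} g(½(x₁² + y₁²),…,½(xₙ² + yₙ²)) · [exp(−(x+iy)ᵀA(x−iy)/2) + exp(−(x−iy)ᵀA(x+iy)/2)] dx dy ≥ 0. In other words, the signed measure μ_A^{abs}, defined as the pushforward of the normalized complex Gaussian measure μ*_A under z ↦ (½|z₁|²,…,½|zₙ|²), is a (nonnegative) probability measure. -/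

import Mathlib

open MeasureTheory Matrix Real Complex Finset



noncomputable section

variable {n : ℕ}

/-- Rotation by angles θ in each (x_j, y_j)-plane, as a linear map. -/
def rotL (θ : Fin n → ℝ) : ((Fin n → ℝ) × (Fin n → ℝ)) →ₗ[ℝ] ((Fin n → ℝ) × (Fin n → ℝ)) where
  toFun p := (fun j => Real.cos (θ j) * p.1 j - Real.sin (θ j) * p.2 j,
              fun j => Real.sin (θ j) * p.1 j + Real.cos (θ j) * p.2 j)
  map_add' p q := by
    ext j <;> simp <;> ring
  map_smul' c p := by
    ext j <;> simp <;> ring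

def swapL : ((Fin n → ℝ) × (Fin n → ℝ)) →ₗ[ℝ] ((Fin n → ℝ) × (Fin n → ℝ)) where
  toFun p := (p.2, p.1)
  map_add' p q := rfl
  map_smul' c p := rfl

lemma rotL_comp (θ : Fin n → ℝ) : (rotL θ).comp (rotL (-θ)) = LinearMap.id := by
  apply LinearMap.ext; intro p
  have h : ∀ j, Real.sin (θ j) ^ 2 + Real.cos (θ j) ^ 2 = 1 :=
    fun j => Real.sin_sq_add_cos_sq (θ j)
  simp only [rotL, LinearMap.coe_comp, LinearMap.coe_mk, AddHom.coe_mk, Function.comp_apply,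
    Pi.neg_apply, Real.cos_neg, Real.sin_neg, LinearMap.id_coe, id_eq]
  refine Prod.ext ?_ ?_ <;> funext j <;> dsimp <;>
    first
      | linear_combination (p.1 j) * h j
      | linear_combination (p.2 j) * h j

lemma swapL_rotL (θ : Fin n → ℝ) : (swapL.comp ((rotL θ).comp swapL)) = rotL (-θ) := by
  apply LinearMap.ext; intro p
  simp only [rotL, swapL, LinearMap.coe_comp, LinearMap.coe_mk, AddHom.coe_mk,
    Function.comp_apply, Pi.neg_apply, Real.cos_neg, Real.sin_neg]
  refine Prod.ext ?_ ?_ <;> funext j <;> dsimp <;> ring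

lemma det_rotL (θ : Fin n → ℝ) : |LinearMap.det (rotL θ)| = 1 := by
  have h1 : LinearMap.det (rotL θ) * LinearMap.det (rotL (-θ)) = 1 := by
    rw [← LinearMap.det_comp, rotL_comp, LinearMap.det_id]
  have hswap : LinearMap.det (swapL (n := n)) * LinearMap.det (swapL (n := n)) = 1 := by
    rw [← LinearMap.det_comp]
    have : (swapL (n := n)).comp swapL = LinearMap.id := rfl
    rw [this, LinearMap.det_id]
  have h2 : LinearMap.det (rotL (-θ)) = LinearMap.det (rotL θ) := by
    rw [← swapL_rotL, LinearMap.det_comp, LinearMap.det_comp]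
    linear_combination (LinearMap.det (rotL θ)) * hswap
  have h3 : LinearMap.det (rotL θ) * LinearMap.det (rotL θ) = 1 := by
    rw [← h2] at h1 ⊢; rw [h2] at h1; rw [h2]; exact h1
  rcases mul_self_eq_one_iff.mp h3 with h | h <;> rw [h] <;> norm_num

instance : (volume : Measure ((Fin n → ℝ) × (Fin n → ℝ))).IsAddHaarMeasure := by
  rw [show (volume : Measure ((Fin n → ℝ) × (Fin n → ℝ)))
      = (volume : Measure (Fin n → ℝ)).prod volume from rfl]
  exact Measure.prod.instIsAddHaarMeasure _ _

lemma measurePreserving_rotL (θ : Fin n → ℝ) :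
    MeasurePreserving (rotL θ) (volume : Measure ((Fin n → ℝ) × (Fin n → ℝ))) volume := by
  have habs := det_rotL θ
  have hdet : LinearMap.det (rotL θ) ≠ 0 := by
    intro h; rw [h, abs_zero] at habs; norm_num at habs
  refine ⟨(rotL θ).continuous_of_finiteDimensional.measurable, ?_⟩
  rw [Measure.map_linearMap_addHaar_eq_smul_addHaar _ hdet]
  have : |(LinearMap.det (rotL θ))⁻¹| = 1 := by
    rw [abs_inv, habs]; norm_num
  rw [this]; simp

end



noncomputable section

variable {n : ℕ}

lemma oneD_integral (m : ℤ) :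
    ∫ x : ℝ, Set.indicator (Set.Icc 0 (2*π)) (fun x : ℝ => Complex.exp ((m:ℂ) * x * Complex.I)) x
      = if m = 0 then ((2*π : ℝ) : ℂ) else 0 := by
  rw [integral_indicator measurableSet_Icc, MeasureTheory.integral_Icc_eq_integral_Ioc,
    ← intervalIntegral.integral_of_le (by positivity : (0:ℝ) ≤ 2*π)]
  by_cases hm : m = 0
  · simp [hm]
  · simp only [hm, if_false]
    have h1 : ∀ x : ℝ, (m:ℂ) * x * Complex.I = ((m:ℂ) * Complex.I) * x := fun x => by ring
    simp_rw [h1]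
    rw [integral_exp_mul_complex (by simp [hm, Complex.I_ne_zero, Complex.ext_iff])]
    have h2 : (m:ℂ) * Complex.I * (2*π : ℝ) = (m:ℤ) * (2 * (π:ℂ) * Complex.I) := by
      push_cast; ring
    rw [h2, Complex.exp_int_mul_two_pi_mul_I]
    simp

variable {k : ℕ}

def cnt (F : Fin k → Fin n) (a : Fin n) : ℕ := (Finset.univ.filter (fun l => F l = a)).card

lemma sum_comp_cnt (F : Fin k → Fin n) (θ : Fin n → ℝ) :
    ∑ l, θ (F l) = ∑ a, (cnt F a : ℝ) * θ a := by
  rw [← Finset.sum_fiberwise Finset.univ F (fun l => θ (F l))]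
  refine Finset.sum_congr rfl fun a _ => ?_
  have h : ∑ l ∈ Finset.univ.filter (fun l => F l = a), θ (F l)
      = ∑ _l ∈ Finset.univ.filter (fun l => F l = a), θ a :=
    Finset.sum_congr rfl (fun l hl => by rw [(Finset.mem_filter.mp hl).2])
  rw [h, Finset.sum_const, cnt, nsmul_eq_mul]

lemma prod_comp_cnt (F : Fin k → Fin n) (w : Fin n → ℂ) :
    ∏ l, w (F l) = ∏ a, w a ^ (cnt F a) := by
  rw [← Finset.prod_fiberwise Finset.univ F (fun l => w (F l))]
  refine Finset.prod_congr rfl fun a _ => ?_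
  have h : ∏ l ∈ Finset.univ.filter (fun l => F l = a), w (F l)
      = ∏ _l ∈ Finset.univ.filter (fun l => F l = a), w a :=
    Finset.prod_congr rfl (fun l hl => by rw [(Finset.mem_filter.mp hl).2])
  rw [h, Finset.prod_const, cnt]

end
noncomputable section
open scoped Real

variable {n : ℕ}

def box (n : ℕ) : Set (Fin n → ℝ) := Set.univ.pi fun _ => Set.Icc 0 (2*π)

lemma box_indicator (h : Fin n → ℝ → ℂ) :
    (box n).indicator (fun θ => ∏ a, h a (θ a))
      = fun θ => ∏ a, (Set.Icc (0:ℝ) (2*π)).indicator (h a) (θ a) := by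
  funext θ
  by_cases hθ : θ ∈ box n
  · rw [Set.indicator_of_mem hθ]
    refine Finset.prod_congr rfl fun a _ => ?_
    rw [Set.indicator_of_mem (hθ a (Set.mem_univ a))]
  · rw [Set.indicator_of_notMem hθ]
    have : ∃ a, θ a ∉ Set.Icc (0:ℝ) (2*π) := by
      by_contra hc
      push_neg at hc
      exact hθ fun a _ => hc a
    obtain ⟨a, ha⟩ := this
    symm
    exact Finset.prod_eq_zero (Finset.mem_univ a) (Set.indicator_of_notMem ha _)

end
noncomputable section
open scoped Real

variable {n k : ℕ}

lemma single_term_integral (F : Fin k → Fin n × Fin n) (c : Fin n × Fin n → ℂ) :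
    ∫ θ in box n, ∏ l, (c (F l) * Complex.exp ((((θ (F l).1 - θ (F l).2 : ℝ)) : ℂ) * Complex.I))
      = (∏ l, c (F l)) *
        ∏ a, (if cnt (fun l => (F l).1) a = cnt (fun l => (F l).2) a then ((2*π : ℝ) : ℂ) else 0) := by
  have key : ∀ θ : Fin n → ℝ,
      ∏ l, (c (F l) * Complex.exp ((((θ (F l).1 - θ (F l).2 : ℝ)) : ℂ) * Complex.I))
        = (∏ l, c (F l)) * ∏ a, Complex.exp
            ((((cnt (fun l => (F l).1) a : ℝ) - (cnt (fun l => (F l).2) a : ℝ)) * θ a : ℝ)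
              * Complex.I) := by
    intro θ
    rw [Finset.prod_mul_distrib]
    congr 1
    rw [← Complex.exp_sum, ← Complex.exp_sum]
    congr 1
    have h1 : ∑ l, ((((θ (F l).1 - θ (F l).2 : ℝ)) : ℂ) * Complex.I)
        = (((∑ l, (θ (F l).1 - θ (F l).2) : ℝ)) : ℂ) * Complex.I := by
      rw [← Finset.sum_mul]; push_cast; ring
    have h2 : ∑ a, ((((cnt (fun l => (F l).1) a : ℝ) - (cnt (fun l => (F l).2) a : ℝ)) * θ a : ℝ)
          : ℂ) * Complex.I
        = (((∑ a, ((cnt (fun l => (F l).1) a : ℝ) - (cnt (fun l => (F l).2) a : ℝ)) * θ a : ℝ))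
          : ℂ) * Complex.I := by
      rw [← Finset.sum_mul]; push_cast; ring
    rw [h1, h2]
    congr 2
    rw [Finset.sum_sub_distrib, sum_comp_cnt (fun l => (F l).1) θ,
      sum_comp_cnt (fun l => (F l).2) θ, ← Finset.sum_sub_distrib]
    refine Finset.sum_congr rfl fun a _ => by ring
  simp_rw [key]
  rw [integral_const_mul]
  congr 1
  rw [← integral_indicator (by
    exact MeasurableSet.univ_pi fun _ => measurableSet_Icc : MeasurableSet (box n))]
  rw [box_indicator (h := fun a x => Complex.exp
    ((((cnt (fun l => (F l).1) a : ℝ) - (cnt (fun l => (F l).2) a : ℝ)) * x : ℝ) * Complex.I))]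
  beta_reduce
  rw [MeasureTheory.integral_fintype_prod_volume_eq_prod (𝕜 := ℂ)
    (f := fun a x => (Set.Icc (0:ℝ) (2*π)).indicator
      (fun x => Complex.exp ((((cnt (fun l => (F l).1) a : ℝ) - (cnt (fun l => (F l).2) a : ℝ))
        * x : ℝ) * Complex.I)) x)]
  refine Finset.prod_congr rfl fun a _ => ?_
  have hcast : ∀ x : ℝ, ((((cnt (fun l => (F l).1) a : ℝ) - (cnt (fun l => (F l).2) a : ℝ))
      * x : ℝ) : ℂ) * Complex.I
      = (((cnt (fun l => (F l).1) a : ℤ) - (cnt (fun l => (F l).2) a : ℤ) : ℤ) : ℂ) * x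
        * Complex.I := by
    intro x; push_cast; ring
  simp_rw [hcast]
  rw [oneD_integral]
  have : ((cnt (fun l => (F l).1) a : ℤ) - (cnt (fun l => (F l).2) a : ℤ) = 0)
      ↔ cnt (fun l => (F l).1) a = cnt (fun l => (F l).2) a := by omega
  simp [this]

end
noncomputable section
open scoped Real

variable {n k : ℕ}

lemma term_re_nonneg (β : Fin n × Fin n → ℝ) (hβ : ∀ q, 0 ≤ β q) (w : Fin n → ℂ)
    (F : Fin k → Fin n × Fin n) :
    0 ≤ ((∏ l, ((β (F l) : ℂ) * w (F l).1 * (starRingEnd ℂ) (w (F l).2))) *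
        ∏ a, (if cnt (fun l => (F l).1) a = cnt (fun l => (F l).2) a then ((2*π : ℝ) : ℂ) else 0)).re := by
  by_cases hbal : ∀ a, cnt (fun l => (F l).1) a = cnt (fun l => (F l).2) a
  · have h2 : (∏ a, (if cnt (fun l => (F l).1) a = cnt (fun l => (F l).2) a
        then ((2*π : ℝ) : ℂ) else 0)) = (((2*π)^n : ℝ) : ℂ) := by
      rw [Finset.prod_congr rfl fun a _ => if_pos (hbal a), Finset.prod_const]
      push_cast; simp
    have h1 : (∏ l, ((β (F l) : ℂ) * w (F l).1 * (starRingEnd ℂ) (w (F l).2)))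
        = (((∏ l, β (F l)) : ℝ) : ℂ) *
          ((∏ l, w (F l).1) * (starRingEnd ℂ) (∏ l, w (F l).1)) := by
      rw [Finset.prod_mul_distrib, Finset.prod_mul_distrib, ← map_prod]
      have hW : (∏ l, w (F l).2) = ∏ l, w (F l).1 := by
        rw [prod_comp_cnt (fun l => (F l).1) w, prod_comp_cnt (fun l => (F l).2) w]
        exact (Finset.prod_congr rfl fun a _ => by rw [hbal a]).symm
      rw [hW]
      push_cast
      ring
    rw [h1, h2, Complex.mul_conj]
    have hβp : 0 ≤ ∏ l, β (F l) := Finset.prod_nonneg fun l _ => hβ (F l)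
    have hn : 0 ≤ Complex.normSq (∏ l, w (F l).1) := Complex.normSq_nonneg _
    simp only [← Complex.ofReal_mul, Complex.ofReal_re]
    positivity
  · push_neg at hbal
    obtain ⟨a, ha⟩ := hbal
    have hz : (∏ a, (if cnt (fun l => (F l).1) a = cnt (fun l => (F l).2) a
        then ((2*π : ℝ) : ℂ) else 0)) = 0 :=
      Finset.prod_eq_zero (Finset.mem_univ a) (if_neg ha)
    rw [hz, mul_zero]
    simp

lemma torus_nonneg (β : Fin n × Fin n → ℝ) (hβ : ∀ q, 0 ≤ β q) (w : Fin n → ℂ) :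
    0 ≤ ∫ θ in box n, (Complex.exp (∑ q : Fin n × Fin n, (β q : ℂ) * w q.1 *
        (starRingEnd ℂ) (w q.2) *
        Complex.exp (((θ q.1 - θ q.2 : ℝ) : ℂ) * Complex.I))).re := by
  classical
  set c : Fin n × Fin n → ℂ := fun q => (β q : ℂ) * w q.1 * (starRingEnd ℂ) (w q.2) with hc
  set G : (Fin n → ℝ) → ℂ := fun θ => ∑ q : Fin n × Fin n, c q *
    Complex.exp (((θ q.1 - θ q.2 : ℝ) : ℂ) * Complex.I) with hG
  set M : ℝ := ∑ q : Fin n × Fin n, ‖c q‖ with hM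
  have hM0 : 0 ≤ M := Finset.sum_nonneg fun q _ => norm_nonneg _
  have hGbd : ∀ θ, ‖G θ‖ ≤ M := by
    intro θ
    refine (norm_sum_le _ _).trans ?_
    refine Finset.sum_le_sum fun q _ => ?_
    rw [norm_mul, Complex.norm_exp_ofReal_mul_I, mul_one]
  have hGcont : Continuous G := by
    refine continuous_finset_sum _ fun q _ => continuous_const.mul ?_
    exact Complex.continuous_exp.comp ((Complex.continuous_ofReal.comp
      ((continuous_apply q.1).sub (continuous_apply q.2))).mul continuous_const)
  have hbox : MeasurableSet (box n) := MeasurableSet.univ_pi fun _ => measurableSet_Icc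
  have hV : volume (box n) < ⊤ := by
    have h1 : volume (box n) = ∏ _a : Fin n, volume (Set.Icc (0:ℝ) (2*π)) := volume_pi_pi _
    rw [h1, Finset.prod_const, Real.volume_Icc]
    exact ENNReal.pow_lt_top ENNReal.ofReal_lt_top
  haveI : IsFiniteMeasure (volume.restrict (box n)) :=
    ⟨by rwa [Measure.restrict_apply_univ]⟩
  -- integrability of exp (G θ)
  have hnormexp : ∀ θ, ‖Complex.exp (G θ)‖ ≤ Real.exp M := by
    intro θ
    rw [Complex.norm_exp]
    exact Real.exp_le_exp.mpr ((Complex.re_le_norm _).trans (hGbd θ))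
  have hInt : Integrable (fun θ => Complex.exp (G θ)) (volume.restrict (box n)) :=
    Integrable.mono' (integrable_const (Real.exp M))
      (Complex.continuous_exp.comp hGcont).aestronglyMeasurable
      (Filter.Eventually.of_forall hnormexp)
  -- each power integrable
  have hIntPow : ∀ k : ℕ, Integrable (fun θ => (G θ) ^ k) (volume.restrict (box n)) := by
    intro k
    refine Integrable.mono' (integrable_const (M ^ k)) (hGcont.pow k).aestronglyMeasurable
      (Filter.Eventually.of_forall fun θ => ?_)
    rw [norm_pow]
    exact pow_le_pow_left₀ (norm_nonneg _) (hGbd θ) k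
  -- step 1: integral of re = re of integral
  rw [show (fun θ => (Complex.exp (G θ)).re) = fun θ => Complex.reCLM (Complex.exp (G θ)) from rfl]
  rw [ContinuousLinearMap.integral_comp_comm _ hInt]
  -- step 2: expand exp as tsum
  have hexp : ∀ θ, Complex.exp (G θ) = ∑' k : ℕ, (G θ) ^ k / ((Nat.factorial k : ℕ) : ℂ) := by
    intro θ
    rw [Complex.exp_eq_exp_ℂ, NormedSpace.exp_eq_tsum_div]
  have hnorm_pow : ∀ (k : ℕ) θ, ‖(G θ) ^ k / ((Nat.factorial k : ℕ) : ℂ)‖ ≤ M ^ k / ((Nat.factorial k : ℕ) : ℝ) := by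
    intro k θ
    rw [norm_div, norm_pow]
    have h1 : ‖((Nat.factorial k : ℕ) : ℂ)‖ = ((Nat.factorial k : ℕ) : ℝ) := by
      simp
    rw [h1]
    gcongr <;> first | exact norm_nonneg _ | exact hGbd θ | positivity
  have hswap : (∫ θ in box n, Complex.exp (G θ)) = ∑' k : ℕ, ∫ θ in box n, (G θ) ^ k / ((Nat.factorial k : ℕ) : ℂ) := by
    simp_rw [hexp]
    refine integral_tsum (fun k => ((hGcont.pow k).div_const _).aestronglyMeasurable) ?_
    have hbd : ∀ k : ℕ, (∫⁻ θ in box n, ‖(G θ) ^ k / ((Nat.factorial k : ℕ) : ℂ)‖₊)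
        ≤ ENNReal.ofReal (M ^ k / ((Nat.factorial k : ℕ) : ℝ)) * volume (box n) := by
      intro k
      calc (∫⁻ θ in box n, ‖(G θ) ^ k / ((Nat.factorial k : ℕ) : ℂ)‖₊)
          ≤ ∫⁻ _θ in box n, ENNReal.ofReal (M ^ k / ((Nat.factorial k : ℕ) : ℝ)) := by
            refine lintegral_mono fun θ => ?_
            rw [← enorm_eq_nnnorm, ← ofReal_norm_eq_enorm]
            exact ENNReal.ofReal_le_ofReal (hnorm_pow k θ)
        _ = ENNReal.ofReal (M ^ k / ((Nat.factorial k : ℕ) : ℝ)) * volume (box n) := by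
            rw [lintegral_const, Measure.restrict_apply_univ]
    refine ne_of_lt (lt_of_le_of_lt (ENNReal.tsum_le_tsum hbd) ?_)
    rw [ENNReal.tsum_mul_right,
      ← ENNReal.ofReal_tsum_of_nonneg (fun k => by positivity)
        (Real.summable_pow_div_factorial M)]
    exact ENNReal.mul_lt_top ENNReal.ofReal_lt_top hV
  rw [hswap]
  -- step 3: re of tsum = tsum of re
  have hsummable : Summable (fun k : ℕ => ∫ θ in box n, (G θ) ^ k / ((Nat.factorial k : ℕ) : ℂ)) := by
    refine Summable.of_norm_bounded (g := fun k => M ^ k / ((Nat.factorial k : ℕ) : ℝ) * (volume (box n)).toReal)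
      ((Real.summable_pow_div_factorial M).mul_right _) (fun k => ?_)
    have hb := norm_integral_le_of_norm_le_const (μ := volume.restrict (box n))
      (Filter.Eventually.of_forall (hnorm_pow k))
    simpa [Measure.restrict_apply_univ, Measure.real] using hb
  rw [show (Complex.reCLM (∑' k : ℕ, ∫ θ in box n, (G θ) ^ k / ((Nat.factorial k : ℕ) : ℂ)))
      = ∑' k : ℕ, Complex.reCLM (∫ θ in box n, (G θ) ^ k / ((Nat.factorial k : ℕ) : ℂ)) from
    (Complex.reCLM.map_tsum hsummable)]
  -- step 4: each summand is nonneg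
  refine tsum_nonneg fun k => ?_
  have hpt : ∀ θ : Fin n → ℝ, (G θ) ^ k / ((Nat.factorial k : ℕ) : ℂ)
      = ((((Nat.factorial k : ℕ) : ℝ))⁻¹ : ℝ) • (G θ) ^ k := by
    intro θ
    rw [Complex.real_smul]
    push_cast
    ring
  simp_rw [hpt]
  rw [integral_smul]
  have hre : ∀ (r : ℝ) (z : ℂ), 0 ≤ r → 0 ≤ z.re → 0 ≤ (Complex.reCLM (r • z)) := by
    intro r z hr hz
    simp only [Complex.reCLM_apply, Complex.real_smul, Complex.mul_re, Complex.ofReal_re,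
      Complex.ofReal_im, zero_mul, sub_zero]
    exact mul_nonneg hr hz
  refine hre _ _ (by positivity) ?_
  -- step 5: expand the power and use the single-term computation
  have hpow : ∀ θ : Fin n → ℝ, (G θ) ^ k
      = ∑ F ∈ Fintype.piFinset (fun _ : Fin k => (Finset.univ : Finset (Fin n × Fin n))),
          ∏ l, (c (F l) * Complex.exp (((θ (F l).1 - θ (F l).2 : ℝ) : ℂ) * Complex.I)) := by
    intro θ
    exact Finset.sum_pow' _ _ k
  simp_rw [hpow]
  have hterm_int : ∀ F : Fin k → Fin n × Fin n,
      Integrable (fun θ => ∏ l, (c (F l) *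
        Complex.exp (((θ (F l).1 - θ (F l).2 : ℝ) : ℂ) * Complex.I))) (volume.restrict (box n)) := by
    intro F
    refine Integrable.mono' (integrable_const (∏ l, ‖c (F l)‖)) ?_
      (Filter.Eventually.of_forall fun θ => ?_)
    · refine (continuous_finset_prod _ fun l _ => continuous_const.mul ?_).aestronglyMeasurable
      exact Complex.continuous_exp.comp ((Complex.continuous_ofReal.comp
        ((continuous_apply (F l).1).sub (continuous_apply (F l).2))).mul continuous_const)
    · rw [norm_prod]
      refine Finset.prod_le_prod (fun l _ => norm_nonneg _) (fun l _ => ?_)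
      rw [norm_mul, Complex.norm_exp_ofReal_mul_I,
        mul_one]
  rw [integral_finset_sum _ (fun F _ => hterm_int F)]
  rw [Complex.re_sum]
  refine Finset.sum_nonneg fun F _ => ?_
  rw [single_term_integral F c]
  exact term_re_nonneg β hβ w F

end



noncomputable section

lemma quad_homog {n : ℕ} (S : Matrix (Fin n) (Fin n) ℝ) (c : ℝ) (x : Fin n → ℝ) :
    (∑ i, ∑ j, (c * x i) * S i j * (c * x j)) = c^2 * ∑ i, ∑ j, x i * S i j * x j := by
  rw [Finset.mul_sum]
  refine Finset.sum_congr rfl fun i _ => ?_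
  rw [Finset.mul_sum]
  exact Finset.sum_congr rfl fun j _ => by ring

lemma posdef_coercive {n : ℕ} (S : Matrix (Fin n) (Fin n) ℝ) (hS : S.PosDef) :
    ∃ ε > 0, ∀ x : Fin n → ℝ, ε * ∑ j, x j ^ 2 ≤ ∑ i, ∑ j, x i * S i j * x j := by
  have hq : ∀ x : Fin n → ℝ, dotProduct (star x) (S.mulVec x) = ∑ i, ∑ j, x i * S i j * x j := by
    intro x
    simp only [dotProduct, Matrix.mulVec, star_trivial]
    refine Finset.sum_congr rfl fun i _ => ?_
    rw [Finset.mul_sum]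
    exact Finset.sum_congr rfl fun j _ => by ring
  rcases Nat.eq_zero_or_pos n with hn | hn
  · subst hn
    exact ⟨1, one_pos, fun x => by simp⟩
  set q : (Fin n → ℝ) → ℝ := fun x => ∑ i, ∑ j, x i * S i j * x j with hqdef
  have hqpos : ∀ x : Fin n → ℝ, x ≠ 0 → 0 < q x := by
    intro x hx
    have := hS.dotProduct_mulVec_pos hx
    rwa [hq x] at this
  have hqcont : Continuous q := by
    refine continuous_finset_sum _ fun i _ => continuous_finset_sum _ fun j _ => ?_
    exact ((continuous_apply i).mul continuous_const).mul (continuous_apply j)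
  set Sph : Set (Fin n → ℝ) := {x | ∑ j, x j ^ 2 = 1} with hSph
  have hscont : Continuous (fun x : Fin n → ℝ => ∑ j, x j ^ 2) :=
    continuous_finset_sum _ fun j _ => (continuous_apply j).pow 2
  have hclosed : IsClosed Sph := isClosed_eq hscont continuous_const
  have hsub : Sph ⊆ Metric.closedBall 0 1 := by
    intro x hx
    rw [Metric.mem_closedBall, dist_zero_right]
    refine (pi_norm_le_iff_of_nonneg zero_le_one).mpr fun j => ?_
    rw [Real.norm_eq_abs, ← sq_le_one_iff_abs_le_one]
    calc x j ^ 2 ≤ ∑ j, x j ^ 2 :=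
          Finset.single_le_sum (fun j _ => sq_nonneg (x j)) (Finset.mem_univ j)
      _ = 1 := hx
  have hcomp : IsCompact Sph :=
    Metric.isCompact_of_isClosed_isBounded hclosed
      (Metric.isBounded_closedBall.subset hsub)
  have hne : Sph.Nonempty := by
    refine ⟨Pi.single ⟨0, hn⟩ 1, ?_⟩
    simp only [hSph, Set.mem_setOf_eq]
    rw [Finset.sum_eq_single ⟨0, hn⟩]
    · simp
    · intro b _ hb; rw [Pi.single_eq_of_ne hb]; ring
    · intro h; exact absurd (Finset.mem_univ _) h
  obtain ⟨u, huS, hmin⟩ := hcomp.exists_isMinOn hne hqcont.continuousOn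
  have hu0 : u ≠ 0 := by
    intro h
    rw [hSph] at huS
    simp only [Set.mem_setOf_eq, h] at huS
    simp at huS
  refine ⟨q u, hqpos u hu0, fun x => ?_⟩
  by_cases hx : x = 0
  · subst hx; simp [hqdef]
  · have hsum : 0 < ∑ j, x j ^ 2 := by
      rcases Function.ne_iff.mp hx with ⟨j, hj⟩
      refine Finset.sum_pos' (fun j _ => sq_nonneg _) ⟨j, Finset.mem_univ j, ?_⟩
      have hj' : x j ≠ 0 := by simpa using hj
      calc (0:ℝ) < |x j| ^ 2 := pow_pos (abs_pos.mpr hj') 2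
        _ = x j ^ 2 := sq_abs _
    set r : ℝ := Real.sqrt (∑ j, x j ^ 2) with hr
    have hrpos : 0 < r := Real.sqrt_pos.mpr hsum
    have hr2 : r ^ 2 = ∑ j, x j ^ 2 := Real.sq_sqrt hsum.le
    have hv : (r⁻¹ • x) ∈ Sph := by
      simp only [hSph, Set.mem_setOf_eq, Pi.smul_apply, smul_eq_mul, mul_pow]
      rw [← Finset.mul_sum, ← hr2]
      field_simp
    have hqv : q (r⁻¹ • x) = (r⁻¹)^2 * q x := by
      simpa [hqdef, Pi.smul_apply, smul_eq_mul] using quad_homog S r⁻¹ x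
    have h3 : q u ≤ q (r⁻¹ • x) := hmin hv
    rw [hqv] at h3
    have h2 : q u * (∑ j, x j ^ 2) ≤ q x := by
      rw [← hr2]
      have h4 := mul_le_mul_of_nonneg_right h3 (le_of_lt (pow_pos hrpos 2))
      calc q u * r ^ 2 ≤ r⁻¹ ^ 2 * q x * r ^ 2 := h4
        _ = q x := by field_simp
    exact h2

end

noncomputable section
open scoped Real

lemma cexp_rot (t : ℝ) :
    Complex.exp ((t : ℂ) * Complex.I) = (Real.cos t : ℂ) + (Real.sin t : ℂ) * Complex.I := by
  rw [Complex.exp_mul_I, ← Complex.ofReal_cos, ← Complex.ofReal_sin]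

lemma conj_mk' (a b : ℝ) :
    (starRingEnd ℂ) ((a : ℂ) + (b : ℂ) * Complex.I) = (a : ℂ) - (b : ℂ) * Complex.I := by
  simp [_root_.map_add, _root_.map_mul, Complex.conj_ofReal, Complex.conj_I]
  ring

lemma volume_box {n : ℕ} : volume (box n) = ENNReal.ofReal (2*π) ^ n := by
  have h1 : volume (box n) = ∏ _a : Fin n, volume (Set.Icc (0:ℝ) (2*π)) := volume_pi_pi _
  rw [h1, Finset.prod_const, Real.volume_Icc, Finset.card_univ, Fintype.card_fin]
  norm_num

lemma volume_box_toReal {n : ℕ} : (volume (box n)).toReal = (2*π) ^ n := by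
  rw [volume_box, ENNReal.toReal_pow, ENNReal.toReal_ofReal (by positivity)]

lemma ofReal_mul_re' (r : ℝ) (w : ℂ) : ((r : ℂ) * w).re = r * w.re := by
  simp [Complex.mul_re]

end

/-- `Q` is the upper `n × n` submatrix of the generator of a skip-free (to the left)
Markov process on `ℤ⁺`. -/
def IsSkipFreeSubmatrix {n : ℕ} (Q : Matrix (Fin n) (Fin n) ℝ) : Prop :=
  (∀ i j : Fin n, (j : ℕ) = (i : ℕ) + 1 → 0 < Q i j) ∧
  (∀ i j : Fin n, (i : ℕ) + 1 < (j : ℕ) → Q i j = 0) ∧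
  (∀ i j : Fin n, i ≠ j → 0 ≤ Q i j) ∧
  (∀ i : Fin n, Q i i < 0) ∧
  (∀ i : Fin n, (i : ℕ) < n - 1 → ∑ j, Q i j = 0) ∧
  (∀ i : Fin n, (i : ℕ) = n - 1 → ∑ j, Q i j < 0)

/-- For `A = −Q` with `Q` a skip-free submatrix and the symmetric part of
`A` positive definite, the signed measure `μ_A^{abs}` — the pushforward of the normalized
complex Gaussian measure `μ*_A` under `z ↦ (½|z₁|², …, ½|zₙ|²)` — is nonnegative: for
every bounded measurable `g ≥ 0`, the integral of
`g(½(x₁²+y₁²), …, ½(xₙ²+yₙ²))` against `dμ_A` is nonnegative. -/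
theorem skipFree_complex_gaussian_pushforward_nonneg {n : ℕ}
    (Q A : Matrix (Fin n) (Fin n) ℝ) (hQ : IsSkipFreeSubmatrix Q) (hA : A = -Q)
    (hC : (((1 : ℝ) / 2) • (A + Aᵀ)).PosDef)
    (g : (Fin n → ℝ) → ℝ) (hgm : Measurable g) (hg0 : ∀ v, 0 ≤ g v)
    (hgbd : ∃ Cb : ℝ, ∀ v, |g v| ≤ Cb) :
    0 ≤ ∫ p : (Fin n → ℝ) × (Fin n → ℝ),
        g (fun j => ((p.1 j) ^ 2 + (p.2 j) ^ 2) / 2) *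
          (Complex.exp (-(∑ i, ∑ j, ((p.1 i : ℂ) + (p.2 i : ℂ) * Complex.I) * (A i j : ℂ) *
              ((p.1 j : ℂ) - (p.2 j : ℂ) * Complex.I)) / 2)
            + Complex.exp (-(∑ i, ∑ j, ((p.1 i : ℂ) - (p.2 i : ℂ) * Complex.I) * (A i j : ℂ) *
              ((p.1 j : ℂ) + (p.2 j : ℂ) * Complex.I)) / 2)).re := by
  classical
  obtain ⟨Cb, hCb⟩ := hgbd
  have hCb0 : 0 ≤ Cb := le_trans (abs_nonneg _) (hCb 0)
  have hQoff : ∀ i j : Fin n, i ≠ j → 0 ≤ Q i j := hQ.2.2.1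
  have hAij : ∀ i j, A i j = - Q i j := by intro i j; rw [hA]; simp
  -- abbreviations
  set f : ((Fin n → ℝ) × (Fin n → ℝ)) → ℝ := fun p =>
      g (fun j => ((p.1 j) ^ 2 + (p.2 j) ^ 2) / 2) *
        (Complex.exp (-(∑ i, ∑ j, ((p.1 i : ℂ) + (p.2 i : ℂ) * Complex.I) * (A i j : ℂ) *
            ((p.1 j : ℂ) - (p.2 j : ℂ) * Complex.I)) / 2)
          + Complex.exp (-(∑ i, ∑ j, ((p.1 i : ℂ) - (p.2 i : ℂ) * Complex.I) * (A i j : ℂ) *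
            ((p.1 j : ℂ) + (p.2 j : ℂ) * Complex.I)) / 2)).re with hfdef
  show 0 ≤ ∫ p, f p
  set zc : ((Fin n → ℝ) × (Fin n → ℝ)) → Fin n → ℂ :=
    fun p j => (p.1 j : ℂ) + (p.2 j : ℂ) * Complex.I with hzcdef
  set gv : ((Fin n → ℝ) × (Fin n → ℝ)) → ℝ :=
    fun p => g (fun j => ((p.1 j) ^ 2 + (p.2 j) ^ 2) / 2) with hgvdef
  set Sfull : ((Fin n → ℝ) × (Fin n → ℝ)) → (Fin n → ℝ) → ℂ := fun p θ =>
    ∑ q : Fin n × Fin n, (A q.1 q.2 : ℂ) * (zc p q.1 * (starRingEnd ℂ) (zc p q.2)) *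
      Complex.exp (((θ q.1 - θ q.2 : ℝ) : ℂ) * Complex.I) with hSfdef
  set βQ : Fin n × Fin n → ℝ := fun q => if q.1 = q.2 then 0 else Q q.1 q.2 / 2 with hβdef
  have hβ0 : ∀ q, 0 ≤ βQ q := by
    intro q
    by_cases h : q.1 = q.2
    · simp [hβdef, h]
    · simp only [hβdef, if_neg h]
      have := hQoff q.1 q.2 (by exact fun hc => h (by rw [hc]))
      linarith
  set c0 : ((Fin n → ℝ) × (Fin n → ℝ)) → ℝ :=
    fun p => ∑ i, Q i i * ((p.1 i) ^ 2 + (p.2 i) ^ 2) / 2 with hc0def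
  set Gz : ((Fin n → ℝ) × (Fin n → ℝ)) → (Fin n → ℝ) → ℂ := fun p θ =>
    ∑ q : Fin n × Fin n, (βQ q : ℂ) * (zc p) q.1 * (starRingEnd ℂ) ((zc p) q.2) *
      Complex.exp (((θ q.1 - θ q.2 : ℝ) : ℂ) * Complex.I) with hGzdef
  -- master pointwise identity
  have hconj_exp : ∀ r : ℝ, (starRingEnd ℂ) (Complex.exp ((r : ℂ) * Complex.I))
      = Complex.exp (((-r : ℝ) : ℂ) * Complex.I) := by
    intro r
    rw [← Complex.exp_conj]
    congr 1
    rw [_root_.map_mul, Complex.conj_ofReal, Complex.conj_I]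
    push_cast
    ring
  have hzz2 : ∀ p : (Fin n → ℝ) × (Fin n → ℝ), ∀ i,
      zc p i * (starRingEnd ℂ) (zc p i) = ((p.1 i ^ 2 + p.2 i ^ 2 : ℝ) : ℂ) := by
    intro p i
    simp only [hzcdef]
    rw [conj_mk']
    push_cast
    linear_combination (-(p.2 i : ℂ) ^ 2) * Complex.I_sq
  have hM : ∀ (θ : Fin n → ℝ) (p : (Fin n → ℝ) × (Fin n → ℝ)),
      f (rotL θ p) = gv p * (2 * (Complex.exp (-(Sfull p θ) / 2)).re) := by
    intro θ p
    have hrot1 : (rotL θ p).1 = fun j => Real.cos (θ j) * p.1 j - Real.sin (θ j) * p.2 j := rfl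
    have hrot2 : (rotL θ p).2 = fun j => Real.sin (θ j) * p.1 j + Real.cos (θ j) * p.2 j := rfl
    have hzc1 : ∀ j, (((rotL θ p).1 j : ℂ) + ((rotL θ p).2 j : ℂ) * Complex.I)
        = Complex.exp (((θ j : ℝ) : ℂ) * Complex.I) * zc p j := by
      intro j
      rw [hrot1, hrot2, cexp_rot]
      simp only [hzcdef]
      push_cast
      apply Complex.ext <;>
        simp [Complex.add_re, Complex.add_im, Complex.mul_re, Complex.mul_im,
          Complex.I_re, Complex.I_im, Complex.ofReal_re, Complex.ofReal_im] <;> ring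
    have hzc2 : ∀ j, (((rotL θ p).1 j : ℂ) - ((rotL θ p).2 j : ℂ) * Complex.I)
        = Complex.exp (((-θ j : ℝ) : ℂ) * Complex.I) * (starRingEnd ℂ) (zc p j) := by
      intro j
      rw [hrot1, hrot2, cexp_rot, Real.cos_neg, Real.sin_neg]
      simp only [hzcdef]
      rw [conj_mk']
      push_cast
      apply Complex.ext <;>
        simp [Complex.add_re, Complex.add_im, Complex.mul_re, Complex.mul_im,
          Complex.I_re, Complex.I_im, Complex.ofReal_re, Complex.ofReal_im] <;> ring
    have hterm : ∀ i j, (((rotL θ p).1 i : ℂ) + ((rotL θ p).2 i : ℂ) * Complex.I) * (A i j : ℂ) *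
        (((rotL θ p).1 j : ℂ) - ((rotL θ p).2 j : ℂ) * Complex.I)
        = (A i j : ℂ) * (zc p i * (starRingEnd ℂ) (zc p j)) *
          Complex.exp (((θ i - θ j : ℝ) : ℂ) * Complex.I) := by
      intro i j
      rw [hzc1 i, hzc2 j]
      have hee : Complex.exp (((θ i : ℝ) : ℂ) * Complex.I) *
          Complex.exp (((-θ j : ℝ) : ℂ) * Complex.I)
          = Complex.exp (((θ i - θ j : ℝ) : ℂ) * Complex.I) := by
        rw [← Complex.exp_add]
        congr 1
        push_cast
        ring
      linear_combination ((A i j : ℂ) * zc p i * (starRingEnd ℂ) (zc p j)) * hee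
    have hconjterm : ∀ i j, (((rotL θ p).1 i : ℂ) - ((rotL θ p).2 i : ℂ) * Complex.I) * (A i j : ℂ) *
        (((rotL θ p).1 j : ℂ) + ((rotL θ p).2 j : ℂ) * Complex.I)
        = (starRingEnd ℂ) ((A i j : ℂ) * (zc p i * (starRingEnd ℂ) (zc p j)) *
          Complex.exp (((θ i - θ j : ℝ) : ℂ) * Complex.I)) := by
      intro i j
      rw [hzc2 i, hzc1 j]
      rw [_root_.map_mul, _root_.map_mul, _root_.map_mul, Complex.conj_ofReal,
        Complex.conj_conj, hconj_exp]
      have hee : Complex.exp (((-θ i : ℝ) : ℂ) * Complex.I) *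
          Complex.exp (((θ j : ℝ) : ℂ) * Complex.I)
          = Complex.exp (((-(θ i - θ j) : ℝ) : ℂ) * Complex.I) := by
        rw [← Complex.exp_add]
        congr 1
        push_cast
        ring
      linear_combination ((A i j : ℂ) * (starRingEnd ℂ) (zc p i) * zc p j) * hee
    have hsum1 : (∑ i, ∑ j, (((rotL θ p).1 i : ℂ) + ((rotL θ p).2 i : ℂ) * Complex.I) *
        (A i j : ℂ) * (((rotL θ p).1 j : ℂ) - ((rotL θ p).2 j : ℂ) * Complex.I))
        = Sfull p θ := by
      simp only [hSfdef]
      rw [Fintype.sum_prod_type]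
      exact Finset.sum_congr rfl fun i _ => Finset.sum_congr rfl fun j _ => hterm i j
    have hsum2 : (∑ i, ∑ j, (((rotL θ p).1 i : ℂ) - ((rotL θ p).2 i : ℂ) * Complex.I) *
        (A i j : ℂ) * (((rotL θ p).1 j : ℂ) + ((rotL θ p).2 j : ℂ) * Complex.I))
        = (starRingEnd ℂ) (Sfull p θ) := by
      simp only [hSfdef]
      rw [map_sum, Fintype.sum_prod_type]
      exact Finset.sum_congr rfl fun i _ => Finset.sum_congr rfl fun j _ => hconjterm i j
    have hgveq : g (fun j => (((rotL θ p).1 j) ^ 2 + ((rotL θ p).2 j) ^ 2) / 2) = gv p := by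
      simp only [hgvdef]
      congr 1
      funext j
      rw [hrot1, hrot2]
      linear_combination (((p.1 j) ^ 2 + (p.2 j) ^ 2) / 2) * Real.sin_sq_add_cos_sq (θ j)
    have hfin : (Complex.exp (-(Sfull p θ) / 2) +
        Complex.exp (-((starRingEnd ℂ) (Sfull p θ)) / 2)).re
        = 2 * (Complex.exp (-(Sfull p θ) / 2)).re := by
      have h1 : -((starRingEnd ℂ) (Sfull p θ)) / 2 = (starRingEnd ℂ) (-(Sfull p θ) / 2) := by
        rw [map_div₀, map_neg, map_ofNat]
      rw [h1, Complex.exp_conj, Complex.add_re, Complex.conj_re]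
      ring
    show g (fun j => (((rotL θ p).1 j) ^ 2 + ((rotL θ p).2 j) ^ 2) / 2) *
        (Complex.exp (-(∑ i, ∑ j, (((rotL θ p).1 i : ℂ) + ((rotL θ p).2 i : ℂ) * Complex.I) *
            (A i j : ℂ) * (((rotL θ p).1 j : ℂ) - ((rotL θ p).2 j : ℂ) * Complex.I)) / 2)
          + Complex.exp (-(∑ i, ∑ j, (((rotL θ p).1 i : ℂ) - ((rotL θ p).2 i : ℂ) * Complex.I) *
            (A i j : ℂ) * (((rotL θ p).1 j : ℂ) + ((rotL θ p).2 j : ℂ) * Complex.I)) / 2)).re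
        = gv p * (2 * (Complex.exp (-(Sfull p θ) / 2)).re)
    rw [hgveq, hsum1, hsum2, hfin]
  -- decomposition of the exponent
  have hdecomp : ∀ (θ : Fin n → ℝ) (p : (Fin n → ℝ) × (Fin n → ℝ)),
      -(Sfull p θ) / 2 = ((c0 p : ℝ) : ℂ) + Gz p θ := by
    intro θ p
    simp only [hSfdef, hGzdef, hc0def]
    rw [← Finset.sum_neg_distrib, Finset.sum_div]
    have hsplit : ∀ q : Fin n × Fin n,
        -((A q.1 q.2 : ℂ) * (zc p q.1 * (starRingEnd ℂ) (zc p q.2)) *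
          Complex.exp (((θ q.1 - θ q.2 : ℝ) : ℂ) * Complex.I)) / 2
        = (if q.1 = q.2 then -((A q.1 q.2 : ℂ) * (zc p q.1 * (starRingEnd ℂ) (zc p q.2)) *
            Complex.exp (((θ q.1 - θ q.2 : ℝ) : ℂ) * Complex.I)) / 2 else 0)
          + (if q.1 = q.2 then 0 else
            -((A q.1 q.2 : ℂ) * (zc p q.1 * (starRingEnd ℂ) (zc p q.2)) *
            Complex.exp (((θ q.1 - θ q.2 : ℝ) : ℂ) * Complex.I)) / 2) := by
      intro q
      split <;> ring
    rw [Finset.sum_congr rfl fun q _ => hsplit q, Finset.sum_add_distrib]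
    congr 1
    · -- diagonal part
      rw [Fintype.sum_prod_type]
      have hinner : ∀ i : Fin n, (∑ j, if i = j then
          -((A i j : ℂ) * (zc p i * (starRingEnd ℂ) (zc p j)) *
            Complex.exp (((θ i - θ j : ℝ) : ℂ) * Complex.I)) / 2 else 0)
          = ((Q i i * ((p.1 i) ^ 2 + (p.2 i) ^ 2) / 2 : ℝ) : ℂ) := by
        intro i
        rw [Finset.sum_ite_eq]
        simp only [Finset.mem_univ, if_true]
        rw [sub_self, Complex.ofReal_zero, zero_mul, Complex.exp_zero, mul_one, hzz2 p i,
          hAij i i]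
        push_cast
        ring
      rw [Finset.sum_congr rfl fun i _ => hinner i, ← Complex.ofReal_sum]
    · -- off-diagonal part
      refine Finset.sum_congr rfl fun q _ => ?_
      by_cases hd : q.1 = q.2
      · rw [if_pos hd]
        simp [hβdef, hd]
      · rw [if_neg hd]
        simp only [hβdef, if_neg hd]
        rw [hAij]
        push_cast
        ring
  -- key identity
  have hKey : ∀ (θ : Fin n → ℝ) (p : (Fin n → ℝ) × (Fin n → ℝ)),
      f (rotL θ p) = (gv p * (2 * Real.exp (c0 p))) * (Complex.exp (Gz p θ)).re := by
    intro θ p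
    rw [hM θ p, hdecomp θ p, Complex.exp_add, ← Complex.ofReal_exp, ofReal_mul_re']
    ring
  -- coercivity
  obtain ⟨ε, hε, hcoer⟩ := posdef_coercive _ hC
  have hcoerA : ∀ v : Fin n → ℝ, ε * ∑ j, v j ^ 2 ≤ ∑ i, ∑ j, v i * A i j * v j := by
    intro v
    refine le_trans (hcoer v) (le_of_eq ?_)
    have hswap : (∑ i, ∑ j, v i * A j i * v j) = ∑ i, ∑ j, v i * A i j * v j := by
      rw [Finset.sum_comm]
      exact Finset.sum_congr rfl fun i _ => Finset.sum_congr rfl fun j _ => by ring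
    have h1 : ∀ i j, v i * ((((1:ℝ)/2) • (A + Aᵀ)) i j) * v j
        = (1/2) * (v i * A i j * v j) + (1/2) * (v i * A j i * v j) := by
      intro i j
      simp only [Matrix.smul_apply, Matrix.add_apply, Matrix.transpose_apply, smul_eq_mul]
      ring
    simp_rw [h1, Finset.sum_add_distrib, ← Finset.mul_sum]
    rw [hswap]
    ring
  -- bound on f
  have hbound : ∀ p : (Fin n → ℝ) × (Fin n → ℝ), |f p| ≤
      (2 * Cb) * (Real.exp (∑ j, -(ε/2) * (p.1 j) ^ 2) * Real.exp (∑ j, -(ε/2) * (p.2 j) ^ 2)) := by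
    intro p
    have hrot0 : rotL (0 : Fin n → ℝ) p = p := by
      refine Prod.ext ?_ ?_ <;> funext j <;>
        simp [rotL]
    have hfp : f p = gv p * (2 * (Complex.exp (-(Sfull p 0) / 2)).re) := by
      rw [← hM 0 p, hrot0]
    -- compute the real part of Sfull p 0
    have hzz : ∀ i j, (zc p i * (starRingEnd ℂ) (zc p j))
        = ((p.1 i * p.1 j + p.2 i * p.2 j : ℝ) : ℂ)
          + ((p.2 i * p.1 j - p.1 i * p.2 j : ℝ) : ℂ) * Complex.I := by
      intro i j
      simp only [hzcdef]
      rw [conj_mk']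
      push_cast
      linear_combination (-(p.2 i : ℂ) * (p.2 j : ℂ)) * Complex.I_sq
    have hS0 : (Sfull p 0).re = (∑ i, ∑ j, p.1 i * A i j * p.1 j)
        + (∑ i, ∑ j, p.2 i * A i j * p.2 j) := by
      have h1 : Sfull p 0 = ∑ q : Fin n × Fin n,
          (A q.1 q.2 : ℂ) * (zc p q.1 * (starRingEnd ℂ) (zc p q.2)) := by
        simp only [hSfdef]
        refine Finset.sum_congr rfl fun q _ => ?_
        simp
      rw [h1, Complex.re_sum]
      have h2 : ∀ q : Fin n × Fin n, ((A q.1 q.2 : ℂ) *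
          (zc p q.1 * (starRingEnd ℂ) (zc p q.2))).re
          = (p.1 q.1 * A q.1 q.2 * p.1 q.2) + (p.2 q.1 * A q.1 q.2 * p.2 q.2) := by
        intro q
        rw [hzz q.1 q.2, ofReal_mul_re']
        simp only [Complex.add_re, Complex.ofReal_re, Complex.mul_re, Complex.ofReal_im,
          Complex.I_re, Complex.I_im, mul_zero, mul_one, zero_mul, sub_zero, zero_sub, add_zero]
        ring
      rw [Finset.sum_congr rfl fun q _ => h2 q, Finset.sum_add_distrib,
        Fintype.sum_prod_type, Fintype.sum_prod_type]
    have hSre : ε * ((∑ j, (p.1 j) ^ 2) + ∑ j, (p.2 j) ^ 2) ≤ (Sfull p 0).re := by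
      rw [hS0, mul_add]
      exact add_le_add (hcoerA p.1) (hcoerA p.2)
    have hrebd : (Complex.exp (-(Sfull p 0) / 2)).re
        ≤ Real.exp ((∑ j, -(ε/2) * (p.1 j) ^ 2) + ∑ j, -(ε/2) * (p.2 j) ^ 2) ∧
        -(Complex.exp (-(Sfull p 0) / 2)).re
        ≤ Real.exp ((∑ j, -(ε/2) * (p.1 j) ^ 2) + ∑ j, -(ε/2) * (p.2 j) ^ 2) := by
      have habs : |(Complex.exp (-(Sfull p 0) / 2)).re| ≤ ‖Complex.exp (-(Sfull p 0) / 2)‖ :=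
        Complex.abs_re_le_norm _
      rw [Complex.norm_exp] at habs
      have hre2 : (-(Sfull p 0) / 2).re = -((Sfull p 0).re) / 2 := by
        rw [show ((2:ℂ)) = ((2:ℝ):ℂ) by norm_num, Complex.div_ofReal_re, Complex.neg_re]
      rw [hre2] at habs
      have hle : -((Sfull p 0).re) / 2
          ≤ (∑ j, -(ε/2) * (p.1 j) ^ 2) + ∑ j, -(ε/2) * (p.2 j) ^ 2 := by
        have : (∑ j, -(ε/2) * (p.1 j) ^ 2) + ∑ j, -(ε/2) * (p.2 j) ^ 2
            = -(ε * ((∑ j, (p.1 j) ^ 2) + ∑ j, (p.2 j) ^ 2)) / 2 := by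
          rw [← Finset.mul_sum, ← Finset.mul_sum]
          ring
        rw [this]
        linarith [hSre]
      have := (abs_le.mp habs)
      constructor
      · exact le_trans this.2 (Real.exp_le_exp.mpr hle)
      · refine le_trans ?_ (Real.exp_le_exp.mpr hle)
        linarith [this.1]
    rw [hfp, ← Real.exp_add, abs_mul]
    have hgabs : |gv p| ≤ Cb := hCb _
    have h2abs : |2 * (Complex.exp (-(Sfull p 0) / 2)).re|
        ≤ 2 * Real.exp ((∑ j, -(ε/2) * (p.1 j) ^ 2) + ∑ j, -(ε/2) * (p.2 j) ^ 2) := by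
      rw [abs_mul, show |(2:ℝ)| = 2 by norm_num]
      rcases abs_cases ((Complex.exp (-(Sfull p 0) / 2)).re) with ⟨h, -⟩ | ⟨h, -⟩ <;> rw [h]
      · linarith [hrebd.1]
      · linarith [hrebd.2]
    calc |gv p| * |2 * (Complex.exp (-(Sfull p 0) / 2)).re|
        ≤ Cb * (2 * Real.exp ((∑ j, -(ε/2) * (p.1 j) ^ 2) + ∑ j, -(ε/2) * (p.2 j) ^ 2)) := by
          refine mul_le_mul hgabs h2abs (abs_nonneg _) hCb0
      _ = 2 * Cb * Real.exp ((∑ j, -(ε/2) * (p.1 j) ^ 2) + ∑ j, -(ε/2) * (p.2 j) ^ 2) := by ring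
  -- measurability of f
  have hgvm : Measurable gv := by
    refine hgm.comp (measurable_pi_lambda _ fun j => ?_)
    fun_prop
  have hcmeas : Continuous (fun p : (Fin n → ℝ) × (Fin n → ℝ) =>
      (Complex.exp (-(∑ i, ∑ j, ((p.1 i : ℂ) + (p.2 i : ℂ) * Complex.I) * (A i j : ℂ) *
          ((p.1 j : ℂ) - (p.2 j : ℂ) * Complex.I)) / 2)
        + Complex.exp (-(∑ i, ∑ j, ((p.1 i : ℂ) - (p.2 i : ℂ) * Complex.I) * (A i j : ℂ) *
          ((p.1 j : ℂ) + (p.2 j : ℂ) * Complex.I)) / 2)).re) := by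
    fun_prop
  have hfmeas : Measurable f := hgvm.mul hcmeas.measurable
  -- integrability of f
  have hIntf : Integrable f (volume : Measure ((Fin n → ℝ) × (Fin n → ℝ))) := by
    have he1 : Integrable (fun v : Fin n → ℝ => Real.exp (∑ j, -(ε/2) * v j ^ 2)) volume := by
      have heq : (fun v : Fin n → ℝ => Real.exp (∑ j, -(ε/2) * v j ^ 2))
          = fun v => ∏ j, Real.exp (-(ε/2) * v j ^ 2) := funext fun v => by rw [Real.exp_sum]
      rw [heq]
      exact Integrable.fintype_prod (𝕜 := ℝ)
        (f := fun (_ : Fin n) (x : ℝ) => Real.exp (-(ε/2) * x ^ 2))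
        (fun _ => integrable_exp_neg_mul_sq (by positivity))
    have hprod : Integrable (fun p : (Fin n → ℝ) × (Fin n → ℝ) =>
        Real.exp (∑ j, -(ε/2) * (p.1 j) ^ 2) * Real.exp (∑ j, -(ε/2) * (p.2 j) ^ 2)) volume :=
      he1.mul_prod he1
    refine Integrable.mono' (hprod.const_mul (2 * Cb)) hfmeas.aestronglyMeasurable
      (Filter.Eventually.of_forall fun p => ?_)
    simpa [Real.norm_eq_abs] using hbound p
  -- measurable embedding of rotations
  have hemb : ∀ θ : Fin n → ℝ, MeasurableEmbedding (rotL (n := n) θ) := by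
    intro θ
    have h2 : (rotL (n := n) (-θ)).comp (rotL θ) = LinearMap.id := by
      have := rotL_comp (n := n) (-θ)
      rwa [neg_neg] at this
    let e : ((Fin n → ℝ) × (Fin n → ℝ)) ≃ₗ[ℝ] ((Fin n → ℝ) × (Fin n → ℝ)) :=
      LinearEquiv.ofLinear (rotL θ) (rotL (-θ)) (rotL_comp θ) h2
    exact e.toContinuousLinearEquiv.toHomeomorph.measurableEmbedding
  have hIntComp : ∀ θ : Fin n → ℝ, Integrable (fun p => f (rotL θ p)) volume :=
    fun θ => ((measurePreserving_rotL θ).integrable_comp_emb (hemb θ)).mpr hIntf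
  have hIntegralComp : ∀ (θ : Fin n → ℝ) (h : ((Fin n → ℝ) × (Fin n → ℝ)) → ℝ),
      ∫ p, h (rotL θ p) = ∫ p, h p :=
    fun θ h => (measurePreserving_rotL θ).integral_comp (hemb θ) h
  haveI : IsFiniteMeasure (volume.restrict (box n)) :=
    ⟨by rw [Measure.restrict_apply_univ, volume_box]
        exact ENNReal.pow_lt_top ENNReal.ofReal_lt_top⟩
  -- joint integrability
  have hJoint : Integrable (Function.uncurry fun (θ : Fin n → ℝ) p => f (rotL θ p))
      ((volume.restrict (box n)).prod volume) := by
    have hroteq : (fun w : (Fin n → ℝ) × ((Fin n → ℝ) × (Fin n → ℝ)) => rotL w.1 w.2)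
        = fun w => ((fun j => Real.cos (w.1 j) * w.2.1 j - Real.sin (w.1 j) * w.2.2 j,
            fun j => Real.sin (w.1 j) * w.2.1 j + Real.cos (w.1 j) * w.2.2 j) :
            (Fin n → ℝ) × (Fin n → ℝ)) := rfl
    have hrotc : Continuous (fun w : (Fin n → ℝ) × ((Fin n → ℝ) × (Fin n → ℝ)) =>
        rotL w.1 w.2) := by
      rw [hroteq]
      fun_prop
    refine (integrable_prod_iff ?_).mpr ⟨?_, ?_⟩
    · exact (hfmeas.comp hrotc.measurable).aestronglyMeasurable
    · exact Filter.Eventually.of_forall fun θ => hIntComp θ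
    · have heq : (fun θ : Fin n → ℝ =>
          ∫ p, ‖Function.uncurry (fun (θ : Fin n → ℝ) p => f (rotL θ p)) (θ, p)‖)
          = fun _ => ∫ p, ‖f p‖ :=
        funext fun θ => hIntegralComp θ (fun p => ‖f p‖)
      rw [heq]
      exact integrable_const _
  have hswap := integral_integral_swap hJoint
  -- LHS computation
  have hLHS : (∫ θ in box n, ∫ p, f (rotL θ p)) = (volume (box n)).toReal * ∫ p, f p := by
    have h1 : (fun θ : Fin n → ℝ => ∫ p, f (rotL θ p)) = fun _ => ∫ p, f p :=
      funext fun θ => hIntegralComp θ f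
    rw [h1, integral_const, Measure.real, Measure.restrict_apply_univ, smul_eq_mul]
  -- RHS nonneg
  have hRHS : 0 ≤ ∫ p, ∫ θ in box n, f (rotL θ p) := by
    refine integral_nonneg fun p => ?_
    have h1 : (fun θ => f (rotL θ p))
        = fun θ => (gv p * (2 * Real.exp (c0 p))) * (Complex.exp (Gz p θ)).re :=
      funext fun θ => hKey θ p
    rw [h1, integral_const_mul]
    refine mul_nonneg (mul_nonneg (hg0 _) (by positivity)) ?_
    exact torus_nonneg βQ hβ0 (zc p)
  rw [← hswap, hLHS] at hRHS
  have hpos : (0 : ℝ) < (volume (box n)).toReal := by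
    rw [volume_box_toReal]; positivity
  exact (mul_nonneg_iff_of_pos_left hpos).mp hRHS
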